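/- Let φ be an isometry of an ℝ-tree T onto itself with ℓ(φ) > 0. Then there exists an isometric embedding A : ℝ → T such that φ(A(t)) = A(t + ℓ(φ)) for all t ∈ ℝ, and the image of A equals the set {x ∈ T : d(x, φ(x)) = ℓ(φ)}. In particular, φ has a unique invariant line (isometric image of ℝ), called its axis, on which φ acts as a translation by ℓ(φ). -/

import Mathlib

/-- An *arc* from `x` to `y` in a metric space: the image of a topological embedding of a
closed real interval `[a,b]` (with `a = b` allowed) sending `a` to `x` and `b` to `y`.
Since `[a,b]` is compact and a metric space is Hausdorff, a topological embedding is the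
same as a continuous injective map. -/
def IsArcIn {T : Type*} [MetricSpace T] (x y : T) (S : Set T) : Prop :=
  ∃ a b : ℝ, a ≤ b ∧ ∃ α : ℝ → T,
    ContinuousOn α (Set.Icc a b) ∧ Set.InjOn α (Set.Icc a b) ∧
    α '' Set.Icc a b = S ∧ α a = x ∧ α b = y

/-- A *geodesic segment* from `x` to `y`: the image of an isometric embedding of a closed
real interval sending the endpoints to `x` and `y`. -/
def IsGeodesicSegmentIn {T : Type*} [MetricSpace T] (x y : T) (S : Set T) : Prop :=
  ∃ a b : ℝ, a ≤ b ∧ ∃ α : ℝ → T,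
    (∀ s ∈ Set.Icc a b, ∀ t ∈ Set.Icc a b, dist (α s) (α t) = |s - t|) ∧
    α '' Set.Icc a b = S ∧ α a = x ∧ α b = y

/-- An ℝ-tree: a metric space in which any two points are joined by a unique arc,
and this arc is a geodesic segment. -/
def IsRTree (T : Type*) [MetricSpace T] : Prop :=
  ∀ x y : T, (∃! S : Set T, IsArcIn x y S) ∧
    ∀ S : Set T, IsArcIn x y S → IsGeodesicSegmentIn x y S

/-- The Gromov product `(x·y)_w = (d(w,x) + d(w,y) − d(x,y))/2`. -/
noncomputable def gromovProd {T : Type*} [MetricSpace T] (w x y : T) : ℝ :=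
  (dist w x + dist w y - dist x y) / 2

/-- The translation length `ℓ(φ) = inf_{x ∈ T} d(x, φ(x))` of a self-map of a metric space. -/
noncomputable def translationLength {T : Type*} [MetricSpace T] (φ : T → T) : ℝ :=
  ⨅ x : T, dist x (φ x)

open Set

namespace RTreeAux

variable {T : Type*} [MetricSpace T]

/-- An isometric map on an interval gives an arc. -/
lemma isArcIn_of_isomOn {γ : ℝ → T} {a b : ℝ} (hab : a ≤ b)
    (hiso : ∀ s ∈ Icc a b, ∀ t ∈ Icc a b, dist (γ s) (γ t) = |s - t|) :
    IsArcIn (γ a) (γ b) (γ '' Icc a b) := by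
  refine ⟨a, b, hab, γ, ?_, ?_, rfl, rfl, rfl⟩
  · have : LipschitzOnWith 1 γ (Icc a b) := by
      refine LipschitzOnWith.of_dist_le_mul ?_
      intro s hs t ht
      rw [hiso s hs t ht, Real.dist_eq]
      simp
    exact this.continuousOn
  · intro s hs t ht hst
    have h0 := hiso s hs t ht
    rw [hst, dist_self] at h0
    have := abs_eq_zero.mp h0.symm
    linarith


lemma contOn_of_isomOn {γ : ℝ → T} {a b : ℝ}
    (hiso : ∀ s ∈ Icc a b, ∀ t ∈ Icc a b, dist (γ s) (γ t) = |s - t|) :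
    ContinuousOn γ (Icc a b) := by
  have : LipschitzOnWith 1 γ (Icc a b) := by
    refine LipschitzOnWith.of_dist_le_mul ?_
    intro s hs t ht
    rw [hiso s hs t ht, Real.dist_eq]; simp
  exact this.continuousOn

lemma dist_param {γ : ℝ → T} {D : ℝ}
    (hiso : ∀ s ∈ Icc 0 D, ∀ t ∈ Icc 0 D, dist (γ s) (γ t) = |s - t|)
    {t : ℝ} (ht : t ∈ Icc 0 D) : dist (γ 0) (γ t) = t := by
  rw [hiso 0 ⟨le_refl 0, le_trans ht.1 ht.2⟩ t ht, abs_sub_comm, sub_zero, abs_of_nonneg ht.1]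

variable (h : IsRTree T)


noncomputable def seg (x y : T) : Set T := ((h x y).1).choose

lemma isArcIn_seg (x y : T) : IsArcIn x y (seg h x y) := ((h x y).1).choose_spec.1

lemma arc_eq_seg {x y : T} {S : Set T} (hS : IsArcIn x y S) : S = seg h x y :=
  ((h x y).1).choose_spec.2 S hS

/-- A nice parametrization of the segment. -/
lemma seg_spec (x y : T) : ∃ γ : ℝ → T,
    (∀ s ∈ Icc 0 (dist x y), ∀ t ∈ Icc 0 (dist x y), dist (γ s) (γ t) = |s - t|) ∧
    γ 0 = x ∧ γ (dist x y) = y ∧ γ '' Icc 0 (dist x y) = seg h x y := by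
  obtain ⟨a, b, hab, α, hiso, himg, ha, hb⟩ := (h x y).2 _ (isArcIn_seg h x y)
  have hD : dist x y = b - a := by
    rw [← ha, ← hb, hiso a ⟨le_refl a, hab⟩ b ⟨hab, le_refl b⟩]
    rw [abs_of_nonpos (by linarith)]; ring
  refine ⟨fun t => α (t + a), ?_, ?_, ?_, ?_⟩
  · intro s hs t ht
    rw [hD] at hs ht
    rw [hiso (s+a) ⟨by linarith [hs.1], by linarith [hs.2]⟩ (t+a) ⟨by linarith [ht.1], by linarith [ht.2]⟩]
    congr 1; ring
  · simpa using ha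
  · rw [hD]; simpa using hb
  · rw [← himg]
    ext z
    constructor
    · rintro ⟨t, ht, rfl⟩
      rw [hD] at ht
      exact ⟨t + a, ⟨by linarith [ht.1], by linarith [ht.2]⟩, rfl⟩
    · rintro ⟨t, ht, rfl⟩
      refine ⟨t - a, ?_, by simp⟩
      rw [hD]; exact ⟨by linarith [ht.1], by linarith [ht.2]⟩

lemma image_eq_seg {γ : ℝ → T} {a b : ℝ} (hab : a ≤ b)
    (hiso : ∀ s ∈ Icc a b, ∀ t ∈ Icc a b, dist (γ s) (γ t) = |s - t|) :
    γ '' Icc a b = seg h (γ a) (γ b) :=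
  arc_eq_seg h (isArcIn_of_isomOn hab hiso)

lemma left_mem_seg (x y : T) : x ∈ seg h x y := by
  obtain ⟨γ, hiso, h0, hD, himg⟩ := seg_spec h x y
  rw [← himg, ← h0]
  exact ⟨0, ⟨le_refl 0, dist_nonneg⟩, rfl⟩

lemma right_mem_seg (x y : T) : y ∈ seg h x y := by
  obtain ⟨γ, hiso, h0, hD, himg⟩ := seg_spec h x y
  rw [← himg]
  exact ⟨dist x y, ⟨dist_nonneg, le_refl _⟩, hD⟩

lemma seg_comm (x y : T) : seg h x y = seg h y x := by
  obtain ⟨γ, hiso, h0, hD, himg⟩ := seg_spec h x y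
  set D := dist x y with hDdef
  have hD0 : 0 ≤ D := dist_nonneg
  have hiso' : ∀ s ∈ Icc 0 D, ∀ t ∈ Icc 0 D, dist (γ (D - s)) (γ (D - t)) = |s - t| := by
    intro s hs t ht
    rw [hiso (D-s) ⟨by linarith [hs.2], by linarith [hs.1]⟩ (D-t) ⟨by linarith [ht.2], by linarith [ht.1]⟩]
    rw [abs_sub_comm]; congr 1; ring
  have him2 : (fun t => γ (D - t)) '' Icc 0 D = seg h ((fun t => γ (D - t)) 0) ((fun t => γ (D - t)) D) :=
    image_eq_seg h hD0 hiso'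
  simp only [sub_zero, sub_self] at him2
  rw [hD, h0] at him2
  rw [← him2, ← himg]
  ext z
  constructor
  · rintro ⟨t, ht, rfl⟩
    exact ⟨D - t, ⟨by linarith [ht.2], by linarith [ht.1]⟩, by simp⟩
  · rintro ⟨t, ht, rfl⟩
    exact ⟨D - t, ⟨by linarith [ht.2], by linarith [ht.1]⟩, rfl⟩

lemma dist_add_of_mem_seg {x y z : T} (hz : z ∈ seg h x y) :
    dist x z + dist z y = dist x y := by
  obtain ⟨γ, hiso, h0, hD, himg⟩ := seg_spec h x y
  rw [← himg] at hz
  obtain ⟨t, ht, rfl⟩ := hz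
  have h1 : dist x (γ t) = t := by rw [← h0]; exact dist_param hiso ht
  have h2 : dist (γ t) y = dist x y - t := by
    conv_lhs => rw [← hD]
    rw [hiso t ht (dist x y) ⟨dist_nonneg, le_refl _⟩]
    rw [abs_of_nonpos (by linarith [ht.2])]; ring
  rw [h1, h2]; ring

lemma dist_le_of_mem_seg {x y z : T} (hz : z ∈ seg h x y) : dist x z ≤ dist x y := by
  have := dist_add_of_mem_seg h hz
  linarith [dist_nonneg (x := z) (y := y)]

lemma mem_seg_of_dist_le {x y z z' : T} (hz : z ∈ seg h x y) (hz' : z' ∈ seg h x y)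
    (hle : dist x z ≤ dist x z') : z ∈ seg h x z' := by
  obtain ⟨γ, hiso, h0, hD, himg⟩ := seg_spec h x y
  rw [← himg] at hz hz'
  obtain ⟨s, hs, rfl⟩ := hz
  obtain ⟨s', hs', rfl⟩ := hz'
  have hds : dist x (γ s) = s := by rw [← h0]; exact dist_param hiso hs
  have hds' : dist x (γ s') = s' := by rw [← h0]; exact dist_param hiso hs'

  have hss' : s ≤ s' := by rw [← hds, ← hds']; exact hle
  have hsub : γ '' Icc 0 s' = seg h (γ 0) (γ s') := by
    refine image_eq_seg h hs'.1 ?_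
    intro u hu v hv
    exact hiso u ⟨hu.1, le_trans hu.2 hs'.2⟩ v ⟨hv.1, le_trans hv.2 hs'.2⟩
  rw [h0] at hsub
  rw [← hsub]
  exact ⟨s, ⟨hs.1, hss'⟩, rfl⟩

lemma seg_sub {x y z' : T} (hz' : z' ∈ seg h x y) : seg h x z' ⊆ seg h x y := by
  intro z hz
  obtain ⟨γ, hiso, h0, hD, himg⟩ := seg_spec h x y
  rw [← himg] at hz'
  obtain ⟨s', hs', rfl⟩ := hz'
  have hsub : γ '' Icc 0 s' = seg h (γ 0) (γ s') := by
    refine image_eq_seg h hs'.1 ?_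
    intro u hu v hv
    exact hiso u ⟨hu.1, le_trans hu.2 hs'.2⟩ v ⟨hv.1, le_trans hv.2 hs'.2⟩
  rw [h0] at hsub
  rw [← hsub] at hz
  rw [← himg]
  obtain ⟨s, hs, rfl⟩ := hz
  exact ⟨s, ⟨hs.1, le_trans hs.2 hs'.2⟩, rfl⟩

lemma eq_of_dist_eq_seg {x y z z' : T} (hz : z ∈ seg h x y) (hz' : z' ∈ seg h x y)
    (heq : dist x z = dist x z') : z = z' := by
  obtain ⟨γ, hiso, h0, hD, himg⟩ := seg_spec h x y
  rw [← himg] at hz hz'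
  obtain ⟨s, hs, rfl⟩ := hz
  obtain ⟨s', hs', rfl⟩ := hz'
  have hds : dist x (γ s) = s := by rw [← h0]; exact dist_param hiso hs
  have hds' : dist x (γ s') = s' := by rw [← h0]; exact dist_param hiso hs'

  have : s = s' := by rw [← hds, ← hds']; exact heq
  rw [this]

lemma seg_self (x : T) : seg h x x = {x} := by
  obtain ⟨γ, hiso, h0, hD, himg⟩ := seg_spec h x x
  rw [← himg, dist_self, Icc_self]
  ext z
  simp only [Set.mem_image, Set.mem_singleton_iff]
  constructor
  · rintro ⟨t, ht, rfl⟩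
    rw [ht, h0]
  · rintro rfl
    exact ⟨0, rfl, h0⟩

lemma dist_in_seg {x z u v : T} (hu : u ∈ seg h x z) (hv : v ∈ seg h x z)
    (huv : dist x u ≤ dist x v) : dist u v = dist x v - dist x u := by
  have h1 : u ∈ seg h x v := mem_seg_of_dist_le h hu hv huv
  have := dist_add_of_mem_seg h h1
  linarith


/-- Gluing: if two segments meet only at the common endpoint, distances add and
the union is the segment. -/
lemma glue {x y z : T} (hint : seg h x y ∩ seg h y z = {y}) :
    dist x z = dist x y + dist y z ∧ seg h x z = seg h x y ∪ seg h y z := by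
  obtain ⟨γ₁, hiso₁, h01, hD1, himg₁⟩ := seg_spec h x y
  obtain ⟨γ₂, hiso₂, h02, hD2, himg₂⟩ := seg_spec h y z
  set D₁ := dist x y with hD₁def
  set D₂ := dist y z with hD₂def
  have hD₁0 : 0 ≤ D₁ := dist_nonneg
  have hD₂0 : 0 ≤ D₂ := dist_nonneg
  -- clamped versions
  set c₁ : ℝ → ℝ := fun t => min (max t 0) D₁ with hc₁
  set c₂ : ℝ → ℝ := fun t => min (max (t - D₁) 0) D₂ with hc₂
  set Γ : ℝ → T := fun t => if t ≤ D₁ then γ₁ (c₁ t) else γ₂ (c₂ t) with hΓ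
  have hc₁mem : ∀ t, c₁ t ∈ Icc 0 D₁ := fun t => ⟨le_min (le_max_right _ _) hD₁0, min_le_right _ _⟩
  have hc₂mem : ∀ t, c₂ t ∈ Icc 0 D₂ := fun t => ⟨le_min (le_max_right _ _) hD₂0, min_le_right _ _⟩
  have hc₁eq : ∀ t ∈ Icc 0 D₁, c₁ t = t := by
    intro t ht; simp only [hc₁]; rw [max_eq_left ht.1, min_eq_left ht.2]
  have hc₂eq : ∀ t ∈ Icc D₁ (D₁ + D₂), c₂ t = t - D₁ := by
    intro t ht; simp only [hc₂]
    rw [max_eq_left (by linarith [ht.1]), min_eq_left (by linarith [ht.2])]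
  have hcont : Continuous Γ := by
    refine Continuous.if_le ?_ ?_ continuous_id continuous_const ?_
    · have hγ : ContinuousOn γ₁ (Icc 0 D₁) := contOn_of_isomOn hiso₁
      refine hγ.comp_continuous ?_ hc₁mem
      exact (continuous_id.max continuous_const).min continuous_const
    · have hγ : ContinuousOn γ₂ (Icc 0 D₂) := contOn_of_isomOn hiso₂
      refine hγ.comp_continuous ?_ hc₂mem
      exact ((continuous_id.sub continuous_const).max continuous_const).min continuous_const
    · intro t ht
      subst ht
      have e1 : c₁ D₁ = D₁ := hc₁eq D₁ ⟨hD₁0, le_refl _⟩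
      have e2 : c₂ D₁ = 0 := by simp [hc₂, hD₂0]
      rw [e1, e2, hD1, h02]
  have hΓle : ∀ t ∈ Icc 0 D₁, Γ t = γ₁ t := by
    intro t ht; simp only [hΓ]; rw [if_pos ht.2, hc₁eq t ht]
  have hΓgt : ∀ t ∈ Icc D₁ (D₁ + D₂), Γ t = γ₂ (t - D₁) := by
    intro t ht
    by_cases hle : t ≤ D₁
    · have heq : t = D₁ := le_antisymm hle ht.1
      subst heq
      simp only [hΓ]; rw [if_pos (le_refl _), hc₁eq _ ⟨hD₁0, le_refl _⟩, hD1, sub_self, h02]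
    · simp only [hΓ]; rw [if_neg hle, hc₂eq t ht]
  -- distance of γ₁ s to x is s, etc.
  have hdx₁ : ∀ s ∈ Icc 0 D₁, dist x (γ₁ s) = s := by
    intro s hs; rw [← h01]; exact dist_param hiso₁ hs
  have hdy₂ : ∀ s ∈ Icc 0 D₂, dist y (γ₂ s) = s := by
    intro s hs; rw [← h02]; exact dist_param hiso₂ hs
  -- image
  have himΓ : Γ '' Icc 0 (D₁ + D₂) = seg h x y ∪ seg h y z := by
    ext w
    constructor
    · rintro ⟨t, ht, rfl⟩
      by_cases hle : t ≤ D₁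
      · left; rw [hΓle t ⟨ht.1, hle⟩, ← himg₁]; exact ⟨t, ⟨ht.1, hle⟩, rfl⟩
      · right
        push_neg at hle
        rw [hΓgt t ⟨le_of_lt hle, ht.2⟩, ← himg₂]
        exact ⟨t - D₁, ⟨by linarith, by linarith [ht.2]⟩, rfl⟩
    · rintro (hw | hw)
      · rw [← himg₁] at hw
        obtain ⟨s, hs, rfl⟩ := hw
        exact ⟨s, ⟨hs.1, by linarith [hs.2]⟩, hΓle s hs⟩
      · rw [← himg₂] at hw
        obtain ⟨s, hs, rfl⟩ := hw
        refine ⟨s + D₁, ⟨by linarith [hs.1], by linarith [hs.2]⟩, ?_⟩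
        rw [hΓgt (s + D₁) ⟨by linarith [hs.1], by linarith [hs.2]⟩]
        congr 1; ring
  -- injectivity
  have hinj : InjOn Γ (Icc 0 (D₁ + D₂)) := by
    intro s hs t ht heq
    rcases le_or_gt s D₁ with hs1 | hs1 <;> rcases le_or_gt t D₁ with ht1 | ht1
    · rw [hΓle s ⟨hs.1, hs1⟩, hΓle t ⟨ht.1, ht1⟩] at heq
      have := hiso₁ s ⟨hs.1, hs1⟩ t ⟨ht.1, ht1⟩
      rw [heq, dist_self] at this
      have := abs_eq_zero.mp this.symm
      linarith
    · -- Γ s ∈ seg x y, Γ t ∈ seg y z, equal ⇒ = y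
      exfalso
      rw [hΓle s ⟨hs.1, hs1⟩, hΓgt t ⟨le_of_lt ht1, ht.2⟩] at heq
      have hmem : γ₁ s ∈ seg h x y ∩ seg h y z := by
        constructor
        · rw [← himg₁]; exact ⟨s, ⟨hs.1, hs1⟩, rfl⟩
        · rw [heq, ← himg₂]; exact ⟨t - D₁, ⟨by linarith, by linarith [ht.2]⟩, rfl⟩
      rw [hint] at hmem
      have h1 : dist y (γ₂ (t - D₁)) = t - D₁ := hdy₂ _ ⟨by linarith, by linarith [ht.2]⟩
      rw [← heq, hmem, dist_self] at h1
      linarith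
    · exfalso
      rw [hΓle t ⟨ht.1, ht1⟩, hΓgt s ⟨le_of_lt hs1, hs.2⟩] at heq
      have hmem : γ₁ t ∈ seg h x y ∩ seg h y z := by
        constructor
        · rw [← himg₁]; exact ⟨t, ⟨ht.1, ht1⟩, rfl⟩
        · rw [← heq, ← himg₂]; exact ⟨s - D₁, ⟨by linarith, by linarith [hs.2]⟩, rfl⟩
      rw [hint] at hmem
      have h1 : dist y (γ₂ (s - D₁)) = s - D₁ := hdy₂ _ ⟨by linarith, by linarith [hs.2]⟩
      rw [heq, hmem, dist_self] at h1
      linarith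
    · rw [hΓgt s ⟨le_of_lt hs1, hs.2⟩, hΓgt t ⟨le_of_lt ht1, ht.2⟩] at heq
      have := hiso₂ (s - D₁) ⟨by linarith, by linarith [hs.2]⟩ (t - D₁) ⟨by linarith, by linarith [ht.2]⟩
      rw [heq, dist_self] at this
      have := abs_eq_zero.mp this.symm
      have : s - D₁ = t - D₁ := by linarith
      linarith
  have harc : IsArcIn x z (Γ '' Icc 0 (D₁ + D₂)) := by
    refine ⟨0, D₁ + D₂, by linarith, Γ, hcont.continuousOn, hinj, rfl, ?_, ?_⟩
    · rw [hΓle 0 ⟨le_refl _, hD₁0⟩, h01]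
    · rw [hΓgt (D₁ + D₂) ⟨by linarith, le_refl _⟩]
      rw [show D₁ + D₂ - D₁ = D₂ by ring, hD2]
  have hseg : seg h x z = seg h x y ∪ seg h y z := by
    rw [← arc_eq_seg h harc, himΓ]
  have hymem : y ∈ seg h x z := by
    rw [hseg]; left; exact right_mem_seg h x y
  exact ⟨(dist_add_of_mem_seg h hymem).symm, hseg⟩

/-- Subsegments of a parametrized segment. -/
lemma subseg {γ : ℝ → T} {D a b : ℝ}
    (hiso : ∀ s ∈ Icc 0 D, ∀ t ∈ Icc 0 D, dist (γ s) (γ t) = |s - t|)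
    (h0a : 0 ≤ a) (hab : a ≤ b) (hbD : b ≤ D) :
    γ '' Icc a b = seg h (γ a) (γ b) :=
  image_eq_seg h hab (fun s hs t ht =>
    hiso s ⟨le_trans h0a hs.1, le_trans hs.2 hbD⟩ t ⟨le_trans h0a ht.1, le_trans ht.2 hbD⟩)

/-- The branch point lemma: two segments from a common point `y` share an initial
segment ending at a point `w` at distance `(x·z)_y` from `y`. -/
lemma wpoint (x y z : T) : ∃ w : T, w ∈ seg h y x ∧ w ∈ seg h y z ∧
    dist y w = gromovProd y x z ∧ seg h y x ∩ seg h y z = seg h y w := by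
  obtain ⟨α, hisoα, hα0, hαD, himgα⟩ := seg_spec h y x
  obtain ⟨β, hisoβ, hβ0, hβD, himgβ⟩ := seg_spec h y z
  set Dx := dist y x with hDx
  set Dz := dist y z with hDz
  have hDx0 : 0 ≤ Dx := dist_nonneg
  have hDz0 : 0 ≤ Dz := dist_nonneg
  set K : Set ℝ := {s ∈ Icc 0 (min Dx Dz) | α s = β s} with hK
  have h0K : (0:ℝ) ∈ K := ⟨⟨le_refl _, le_min hDx0 hDz0⟩, by rw [hα0, hβ0]⟩
  have hKne : K.Nonempty := ⟨0, h0K⟩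
  have hKbdd : BddAbove K := ⟨min Dx Dz, fun s hs => hs.1.2⟩
  have hKclosed : IsClosed K := by
    have hcα : ContinuousOn α (Icc 0 (min Dx Dz)) :=
      (contOn_of_isomOn hisoα).mono (Icc_subset_Icc (le_refl _) (min_le_left _ _))
    have hcβ : ContinuousOn β (Icc 0 (min Dx Dz)) :=
      (contOn_of_isomOn hisoβ).mono (Icc_subset_Icc (le_refl _) (min_le_right _ _))
    have hf : ContinuousOn (fun s => dist (α s) (β s)) (Icc 0 (min Dx Dz)) :=
      continuous_dist.comp_continuousOn (f := fun s => (α s, β s)) (hcα.prodMk hcβ)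
    have hKeq : K = Icc 0 (min Dx Dz) ∩ (fun s => dist (α s) (β s)) ⁻¹' {0} := by
      ext s
      simp only [hK, Set.mem_setOf_eq, Set.mem_inter_iff, Set.mem_preimage, Set.mem_singleton_iff]
      exact and_congr_right fun _ => by rw [dist_eq_zero]
    rw [hKeq]
    exact hf.preimage_isClosed_of_isClosed isClosed_Icc isClosed_singleton
  set t₀ := sSup K with ht₀
  have ht₀K : t₀ ∈ K := hKclosed.csSup_mem hKne hKbdd
  have ht₀mem : t₀ ∈ Icc 0 (min Dx Dz) := ht₀K.1
  have ht₀x : t₀ ∈ Icc 0 Dx := ⟨ht₀mem.1, le_trans ht₀mem.2 (min_le_left _ _)⟩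
  have ht₀z : t₀ ∈ Icc 0 Dz := ⟨ht₀mem.1, le_trans ht₀mem.2 (min_le_right _ _)⟩
  set w := α t₀ with hw
  have hwx : w ∈ seg h y x := by rw [← himgα]; exact ⟨t₀, ht₀x, rfl⟩
  have hwz : w ∈ seg h y z := by
    rw [hw, ht₀K.2, ← himgβ]; exact ⟨t₀, ht₀z, rfl⟩
  have hdyw : dist y w = t₀ := by rw [hw, ← hα0]; exact dist_param hisoα ht₀x
  have hint : seg h y x ∩ seg h y z = seg h y w := by
    apply Set.Subset.antisymm
    · rintro p ⟨hpx, hpz⟩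
      rw [← himgα] at hpx
      rw [← himgβ] at hpz
      obtain ⟨s, hs, rfl⟩ := hpx
      obtain ⟨s', hs', heq⟩ := hpz
      have hdys : dist y (α s) = s := by rw [← hα0]; exact dist_param hisoα hs
      have hdys' : dist y (β s') = s' := by rw [← hβ0]; exact dist_param hisoβ hs'
      have hss' : s = s' := by rw [← hdys, ← hdys', heq]
      have hsK : s ∈ K := by
        refine ⟨⟨hs.1, le_min hs.2 (by rw [hss']; exact hs'.2)⟩, ?_⟩
        rw [hss', heq, ← hss']
      have hst₀ : s ≤ t₀ := le_csSup hKbdd hsK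
      refine mem_seg_of_dist_le h ?_ hwx ?_
      · rw [← himgα]; exact ⟨s, hs, rfl⟩
      · rw [hdyw, hdys]; exact hst₀
    · exact fun p hp => ⟨seg_sub h hwx hp, seg_sub h hwz hp⟩
  -- the two outer parts meet only at w
  have hsegwx : seg h w x = α '' Icc t₀ Dx := by
    have := subseg h hisoα ht₀x.1 ht₀x.2 (le_refl Dx)
    rw [hαD] at this
    rw [hw]; exact this.symm
  have hsegwz : seg h w z = β '' Icc t₀ Dz := by
    have := subseg h hisoβ ht₀z.1 ht₀z.2 (le_refl Dz)
    rw [hβD] at this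
    rw [hw, ht₀K.2]; exact this.symm
  have hwbranch : seg h w x ∩ seg h w z = {w} := by
    apply Set.Subset.antisymm
    · rintro p ⟨hpx, hpz⟩
      rw [hsegwx] at hpx
      rw [hsegwz] at hpz
      obtain ⟨s, hs, rfl⟩ := hpx
      obtain ⟨s', hs', heq⟩ := hpz
      have hsx : s ∈ Icc 0 Dx := ⟨le_trans ht₀x.1 hs.1, hs.2⟩
      have hs'z : s' ∈ Icc 0 Dz := ⟨le_trans ht₀z.1 hs'.1, hs'.2⟩
      have hdys : dist y (α s) = s := by rw [← hα0]; exact dist_param hisoα hsx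
      have hdys' : dist y (β s') = s' := by rw [← hβ0]; exact dist_param hisoβ hs'z
      have hss' : s = s' := by rw [← hdys, ← hdys', heq]
      have hsK : s ∈ K := by
        refine ⟨⟨hsx.1, le_min hsx.2 (by rw [hss']; exact hs'z.2)⟩, ?_⟩
        rw [hss', heq, ← hss']
      have hst₀ : s ≤ t₀ := le_csSup hKbdd hsK
      have : s = t₀ := le_antisymm hst₀ hs.1
      rw [mem_singleton_iff, this, hw]
    · intro p hp
      rw [mem_singleton_iff] at hp
      rw [hp]
      exact ⟨left_mem_seg h w x, left_mem_seg h w z⟩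
  have hglue := glue h (by rw [seg_comm h x w]; exact hwbranch)
  have hdwx : dist w x = Dx - t₀ := by
    have := dist_add_of_mem_seg h hwx
    rw [hdyw] at this; linarith
  have hdwz : dist w z = Dz - t₀ := by
    have := dist_add_of_mem_seg h hwz
    rw [hdyw] at this; linarith
  have hgp : dist y w = gromovProd y x z := by
    rw [hdyw, gromovProd]
    have h1 := hglue.1
    rw [dist_comm x w] at h1
    rw [← hDx, ← hDz]
    rw [hdwx, hdwz] at h1
    linarith
  exact ⟨w, hwx, hwz, hgp, hint⟩

/-- Betweenness from additivity of distances. -/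
lemma between_of_dist_add {x y z : T} (hadd : dist x y + dist y z = dist x z) :
    seg h x y ∩ seg h y z = {y} ∧ seg h x z = seg h x y ∪ seg h y z ∧ y ∈ seg h x z := by
  obtain ⟨w, hwx, hwz, hgp, hint⟩ := wpoint h x y z
  have hgp0 : gromovProd y x z = 0 := by
    rw [gromovProd, dist_comm y x]
    rw [← hadd]; ring
  have hwy : w = y := by
    have : dist y w = 0 := by rw [hgp, hgp0]
    exact (dist_eq_zero.mp this).symm
  rw [hwy, seg_self] at hint
  have hint' : seg h x y ∩ seg h y z = {y} := by rw [seg_comm h x y]; exact hint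
  obtain ⟨_, hunion⟩ := glue h hint'
  exact ⟨hint', hunion, by rw [hunion]; exact Or.inl (right_mem_seg h x y)⟩

/-- Isometric equivalences map segments to segments. -/
lemma image_seg (f : T ≃ᵢ T) (x y : T) : f '' seg h x y = seg h (f x) (f y) := by
  obtain ⟨γ, hiso, h0, hD, himg⟩ := seg_spec h x y
  have hDeq : dist (f x) (f y) = dist x y := f.dist_eq x y
  have hiso' : ∀ s ∈ Icc 0 (dist x y), ∀ t ∈ Icc 0 (dist x y),
      dist ((f ∘ γ) s) ((f ∘ γ) t) = |s - t| := by
    intro s hs t ht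
    simp only [Function.comp_apply, f.dist_eq]
    exact hiso s hs t ht
  have h2 := image_eq_seg h dist_nonneg hiso'
  simp only [Function.comp_apply] at h2
  rw [h0, hD] at h2
  rw [← himg, ← h2]
  exact (Set.image_comp (⇑f) γ _).symm

end RTreeAux
lemma real_iso_dichotomy (ψ : ℝ → ℝ) (hiso : ∀ s t, |ψ s - ψ t| = |s - t|) :
    (∀ t, ψ t = ψ 0 + t) ∨ (∀ t, ψ t = ψ 0 - t) := by
  have hpt : ∀ t, ψ t = ψ 0 + t ∨ ψ t = ψ 0 - t := by
    intro t
    have h1 := hiso t 0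
    rw [sub_zero] at h1
    rcases abs_cases (ψ t - ψ 0) with ⟨h2, _⟩ | ⟨h2, _⟩ <;>
      rcases abs_cases t with ⟨h3, _⟩ | ⟨h3, _⟩ <;>
      [left; right; right; left] <;> linarith
  rcases hpt 1 with h1 | h1
  · left
    intro t
    rcases hpt t with h2 | h2
    · exact h2
    · have h3 := hiso t 1
      rw [h1, h2] at h3
      have h4 : t = 0 := by
        rcases abs_cases (ψ 0 - t - (ψ 0 + 1)) with ⟨h5, _⟩ | ⟨h5, _⟩ <;>
          rcases abs_cases (t - 1) with ⟨h6, _⟩ | ⟨h6, _⟩ <;> linarith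
      rw [h2, h4]; ring
  · right
    intro t
    rcases hpt t with h2 | h2
    · have h3 := hiso t 1
      rw [h1, h2] at h3
      have h4 : t = 0 := by
        rcases abs_cases (ψ 0 + t - (ψ 0 - 1)) with ⟨h5, _⟩ | ⟨h5, _⟩ <;>
          rcases abs_cases (t - 1) with ⟨h6, _⟩ | ⟨h6, _⟩ <;> linarith
      rw [h2, h4]; ring
    · exact h2


set_option maxHeartbeats 2000000 in
/-- A hyperbolic isometry `φ` of an ℝ-tree (i.e. with `ℓ(φ) > 0`) has an axis: there is an
isometric embedding `A : ℝ → T` on which `φ` acts as translation by `ℓ(φ)`, whose image is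
exactly the set of points moved the minimal distance `ℓ(φ)`; moreover this is the unique
`φ`-invariant line. -/
theorem axis_of_hyperbolic {T : Type*} [MetricSpace T] (h : IsRTree T) (φ : T ≃ᵢ T)
    (hl : 0 < translationLength (⇑φ)) :
    ∃ A : ℝ → T, Isometry A ∧
      (∀ t : ℝ, φ (A t) = A (t + translationLength (⇑φ))) ∧
      Set.range A = {x : T | dist x (φ x) = translationLength (⇑φ)} ∧
      ∀ B : ℝ → T, Isometry B → (⇑φ) '' Set.range B = Set.range B →
        Set.range B = Set.range A := by
  classical
  open RTreeAux in
  -- T is nonempty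
  have hne : Nonempty T := by
    by_contra hc
    rw [not_nonempty_iff] at hc
    rw [translationLength, Real.iInf_of_isEmpty] at hl
    exact lt_irrefl 0 hl
  have hbdd : BddBelow (Set.range fun x : T => dist x (φ x)) :=
    ⟨0, by rintro _ ⟨x, rfl⟩; exact dist_nonneg⟩
  have hlle : ∀ x : T, translationLength (⇑φ) ≤ dist x (φ x) := fun x => ciInf_le hbdd x
  obtain ⟨p⟩ := hne
  set D := dist p (φ p) with hD
  set g := gromovProd (φ p) p (φ (φ p)) with hg
  obtain ⟨r, hrp, hr2, hdr, hintp⟩ := wpoint h p (φ p) (φ (φ p))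
  rw [← hg] at hdr
  have hDφ : dist (φ p) (φ (φ p)) = D := φ.dist_eq p (φ p)
  have hg0 : 0 ≤ g := by rw [← hdr]; exact dist_nonneg
  have hdpr : dist p r = D - g := by
    have := dist_add_of_mem_seg h hrp
    rw [hdr, dist_comm (φ p) p, ← hD, dist_comm r p] at this
    linarith
  -- strict inequality 2g < D
  have hgD : 2 * g < D := by
    by_contra hcon
    push_neg at hcon
    obtain ⟨γ, hγiso, hγ0, hγD, hγimg⟩ := seg_spec h p (φ p)
    have hD0 : 0 ≤ D := dist_nonneg
    set m := γ (D / 2) with hm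
    have hmmem : m ∈ seg h p (φ p) := by
      rw [← hγimg]; exact ⟨D/2, ⟨by linarith, by linarith⟩, rfl⟩
    have hdpm : dist p m = D / 2 := by
      rw [hm, ← hγ0]; exact dist_param hγiso ⟨by linarith, by linarith⟩
    have hdφpm : dist (φ p) m = D / 2 := by
      have := dist_add_of_mem_seg h hmmem
      rw [hdpm, ← hD, dist_comm m (φ p)] at this
      linarith
    have hmseg : m ∈ seg h (φ p) (φ (φ p)) := by
      have h1 : m ∈ seg h (φ p) p := by rw [← seg_comm]; exact hmmem
      have h2 : m ∈ seg h (φ p) r :=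
        mem_seg_of_dist_le h h1 hrp (by rw [hdφpm, hdr]; linarith)
      exact seg_sub h hr2 h2
    have hφm : φ m ∈ seg h (φ p) (φ (φ p)) := by
      rw [← image_seg h φ p (φ p)]
      exact ⟨m, hmmem, rfl⟩
    have heqm : m = φ m := by
      refine eq_of_dist_eq_seg h hmseg hφm ?_
      rw [hdφpm, φ.dist_eq p m, hdpm]
    have h0 : dist m (φ m) = 0 := by rw [← heqm, dist_self]
    have := hlle m
    rw [h0] at this
    linarith
  set L := D - 2 * g with hLdef
  have hL : 0 < L := by rw [hLdef]; linarith
  -- φ r is on seg (φ p) (φ² p) at distance D - g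
  have hrseg : r ∈ seg h (φ p) (φ (φ p)) := hr2
  have hφrseg : φ r ∈ seg h (φ p) (φ (φ p)) := by
    have : φ r ∈ ⇑φ '' seg h (φ p) p := ⟨r, hrp, rfl⟩
    rw [image_seg h φ (φ p) p] at this
    rw [seg_comm]
    exact this
  have hdφpφr : dist (φ p) (φ r) = D - g := by rw [φ.dist_eq, ← hdpr, dist_comm]
  have hdφ2pφr : dist (φ (φ p)) (φ r) = g := by
    have := dist_add_of_mem_seg h hφrseg
    rw [hdφpφr, hDφ, dist_comm (φ r) (φ (φ p))] at this
    linarith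
  have hrL : dist r (φ r) = L := by
    have := dist_in_seg h hrseg hφrseg (by rw [hdr, hdφpφr]; linarith)
    rw [this, hdr, hdφpφr]; ring
  -- seg r (φ r) sits inside seg (φ p) (φ² p)
  have hsegrsub : seg h r (φ r) ⊆ seg h (φ p) (φ (φ p)) := by
    have h1 : r ∈ seg h (φ p) (φ r) :=
      mem_seg_of_dist_le h hrseg hφrseg (by rw [hdr, hdφpφr]; linarith)
    have h2 : seg h (φ r) r ⊆ seg h (φ r) (φ p) :=
      seg_sub h (by rw [← seg_comm]; exact h1)
    have h3 : seg h (φ r) (φ p) ⊆ seg h (φ p) (φ (φ p)) := by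
      rw [seg_comm h (φ r) (φ p)]
      exact seg_sub h hφrseg
    rw [seg_comm]
    exact subset_trans h2 h3
  -- Base fact: consecutive segments of the axis meet only at the common endpoint
  have hbase : seg h r (φ r) ∩ seg h (φ r) (φ (φ r)) = {φ r} := by
    obtain ⟨w₂, hw₂1, hw₂2, hw₂d, hint₂⟩ := wpoint h (φ p) (φ (φ p)) (φ (φ (φ p)))
    have hgp2 : gromovProd (φ (φ p)) (φ p) (φ (φ (φ p))) = g := by
      rw [hg]
      unfold gromovProd
      rw [show dist (φ (φ p)) (φ p) = dist (φ p) p from φ.dist_eq (φ p) p,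
        show dist (φ (φ p)) (φ (φ (φ p))) = dist (φ p) (φ (φ p)) from φ.dist_eq (φ p) (φ (φ p)),
        show dist (φ p) (φ (φ (φ p))) = dist p (φ (φ p)) from φ.dist_eq p (φ (φ p))]
    rw [hgp2] at hw₂d
    have hw₂r : w₂ = φ r := by
      refine eq_of_dist_eq_seg h hw₂1 ?_ ?_
      · rw [← seg_comm]; exact hφrseg
      · rw [hw₂d, hdφ2pφr]
    rw [hw₂r] at hint₂
    have hsub2 : seg h (φ r) (φ (φ r)) ⊆ seg h (φ (φ p)) (φ (φ (φ p))) := by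
      intro z hz
      have h1 : z ∈ ⇑φ '' seg h r (φ r) := by
        rw [image_seg h φ r (φ r)]; exact hz
      obtain ⟨z', hz', rfl⟩ := h1
      have := hsegrsub hz'
      rw [← image_seg h φ (φ p) (φ (φ p))]
      exact ⟨z', this, rfl⟩
    apply Set.Subset.antisymm
    · rintro z ⟨hz1, hz2⟩
      have hzbig1 : z ∈ seg h (φ p) (φ (φ p)) := hsegrsub hz1
      have hzbig2 : z ∈ seg h (φ (φ p)) (φ (φ (φ p))) := hsub2 hz2
      have hzw : z ∈ seg h (φ (φ p)) (φ r) := by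
        rw [← hint₂]
        exact ⟨by rw [← seg_comm]; exact hzbig1, hzbig2⟩
      -- distance computations force z = φ r
      have hd1 : dist (φ (φ p)) z ≤ g := by
        have := dist_le_of_mem_seg h hzw
        rw [hdφ2pφr] at this; exact this
      have hd2 : dist (φ p) z + dist z (φ (φ p)) = D := by
        have := dist_add_of_mem_seg h hzbig1
        rw [hDφ] at this
        exact this
      have hd3 : dist r z + dist z (φ r) = L := by
        have := dist_add_of_mem_seg h hz1
        rw [hrL] at this; exact this
      have hd4 : dist (φ p) z ≤ dist (φ p) r + dist r z := dist_triangle _ _ _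
      rw [dist_comm z (φ (φ p))] at hd2
      have hzeq : dist (φ (φ p)) z = g := by
        rw [hdr] at hd4
        have h5 := dist_nonneg (x := z) (y := φ r)
        linarith
      refine eq_of_dist_eq_seg h hzw (right_mem_seg h _ _) ?_
      rw [hzeq, hdφ2pφr]
    · intro z hz
      rw [mem_singleton_iff] at hz
      rw [hz]
      exact ⟨right_mem_seg h _ _, left_mem_seg h _ _⟩
  -- iterated translation distances
  have hpowadd : ∀ (j k : ℤ) (x : T), (φ ^ (j + k)) x = (φ ^ j) ((φ ^ k) x) := by
    intro j k x
    rw [zpow_add]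
    rfl
  have hpow1 : ∀ x : T, (φ ^ (1 : ℤ)) x = φ x := by intro x; rw [zpow_one]
  have hpow0 : ∀ x : T, (φ ^ (0 : ℤ)) x = x := by intro x; rw [zpow_zero]; rfl
  have hpowsucc : ∀ (k : ℤ) (x : T), (φ ^ (k + 1)) x = (φ ^ k) (φ x) := by
    intro k x
    rw [hpowadd k 1 x, hpow1]
  have hstep : ∀ k : ℤ, dist ((φ ^ k) r) ((φ ^ (k+1)) r) = L := by
    intro k
    rw [hpowsucc k r]
    rw [(φ ^ k).dist_eq]
    exact hrL
  -- the shifted base fact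
  have hbasek : ∀ k : ℤ, seg h ((φ ^ k) r) ((φ ^ (k+1)) r) ∩
      seg h ((φ ^ (k+1)) r) ((φ ^ (k+2)) r) = {(φ ^ (k+1)) r} := by
    intro k
    have h1 : (φ ^ k) '' (seg h r (φ r) ∩ seg h (φ r) (φ (φ r))) = {(φ ^ k) (φ r)} := by
      rw [hbase]
      exact Set.image_singleton
    rw [Set.image_inter (φ ^ k).injective, image_seg, image_seg] at h1
    have e1 : (φ ^ k) (φ r) = (φ ^ (k+1)) r := (hpowsucc k r).symm
    have e2 : (φ ^ k) (φ (φ r)) = (φ ^ (k+2)) r := by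
      rw [show k + 2 = k + 1 + 1 from by ring, hpowsucc (k+1) r, hpowsucc k (φ r)]
    rw [e1, e2] at h1
    exact h1
  have hdistnat : ∀ n : ℕ, dist r ((φ ^ (n : ℤ)) r) = n * L ∧
      dist r ((φ ^ ((n : ℤ) + 1)) r) = (n + 1) * L := by
    intro n
    induction n with
    | zero =>
      constructor
      · rw [Int.ofNat_zero, hpow0, dist_self]; simp
      · rw [Int.ofNat_zero, zero_add, hpow1, hrL]; simp
    | succ n ih =>
      obtain ⟨ih1, ih2⟩ := ih
      have hcast : ((n + 1 : ℕ) : ℤ) = (n : ℤ) + 1 := by push_cast; ring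
      constructor
      · rw [hcast]; rw [ih2]; push_cast; ring
      · -- main inductive step
        rw [hcast]
        set q := (φ ^ ((n : ℤ) + 1)) r with hq
        obtain ⟨w₃, hw₃1, hw₃2, hw₃d, hint₃⟩ := wpoint h r q ((φ ^ ((n : ℤ) + 1 + 1)) r)
        set t₀ := gromovProd q r ((φ ^ ((n : ℤ) + 1 + 1)) r) with ht₀
        have ht₀0 : 0 ≤ t₀ := by rw [← hw₃d]; exact dist_nonneg
        have hdqprev : dist q ((φ ^ (n : ℤ)) r) = L := by
          rw [dist_comm]; exact hstep (n : ℤ)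
        have hprevmem : (φ ^ (n : ℤ)) r ∈ seg h r q := by
          have hadd : dist r ((φ ^ (n : ℤ)) r) + dist ((φ ^ (n : ℤ)) r) q = dist r q := by
            rw [ih1, ih2, dist_comm ((φ ^ (n : ℤ)) r) q, hdqprev]; push_cast; ring
          exact (between_of_dist_add h hadd).2.2
        have ht₀z : t₀ = 0 := by
          by_contra hcon
          have ht₀pos : 0 < t₀ := lt_of_le_of_ne ht₀0 (Ne.symm hcon)
          set δ := min t₀ L with hδ
          have hδpos : 0 < δ := lt_min ht₀pos hL
          obtain ⟨γ₃, hγ₃iso, hγ₃0, hγ₃D, hγ₃img⟩ := seg_spec h q w₃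
          have hδmem : δ ∈ Icc 0 (dist q w₃) := by
            rw [hw₃d]
            exact ⟨le_of_lt hδpos, min_le_left _ _⟩
          set w' := γ₃ δ with hw'
          have hw'qw₃ : w' ∈ seg h q w₃ := by rw [← hγ₃img]; exact ⟨δ, hδmem, rfl⟩
          have hdqw' : dist q w' = δ := by rw [hw', ← hγ₃0]; exact dist_param hγ₃iso hδmem
          have hw'qr : w' ∈ seg h q r := seg_sub h hw₃1 hw'qw₃
          have hw'q2 : w' ∈ seg h q ((φ ^ ((n : ℤ) + 1 + 1)) r) := seg_sub h hw₃2 hw'qw₃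
          have hw'prev : w' ∈ seg h q ((φ ^ (n : ℤ)) r) := by
            refine mem_seg_of_dist_le h hw'qr ?_ ?_
            · rw [seg_comm]; exact hprevmem
            · rw [hdqw', hdqprev]; exact min_le_right _ _
          have hbk := hbasek (n : ℤ)
          have hw'int : w' ∈ seg h ((φ ^ (n : ℤ)) r) ((φ ^ ((n : ℤ)+1)) r) ∩
              seg h ((φ ^ ((n : ℤ)+1)) r) ((φ ^ ((n : ℤ)+2)) r) := by
            constructor
            · rw [seg_comm]; exact hw'prev
            · rw [show (n : ℤ) + 2 = (n : ℤ) + 1 + 1 from by ring]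
              exact hw'q2
          rw [hbk] at hw'int
          rw [mem_singleton_iff] at hw'int
          rw [hw'int] at hdqw'
          rw [dist_self] at hdqw'
          linarith
        have hw₃q : w₃ = q := by
          have : dist q w₃ = 0 := by rw [hw₃d, ht₀z]
          exact (dist_eq_zero.mp this).symm
        rw [hw₃q, seg_self] at hint₃
        have hglue := glue h (by rw [seg_comm h r q]; exact hint₃)
        rw [hglue.1, ih2, hstep ((n : ℤ) + 1)]
        push_cast; ring
  have hdistz : ∀ k : ℤ, dist r ((φ ^ k) r) = |(k : ℝ)| * L := by
    intro k
    rcases Int.natAbs_eq k with hk | hk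
    · rw [hk, (hdistnat k.natAbs).1]
      congr 1
      push_cast [Nat.cast_natAbs]
      rw [abs_abs]
    · rw [hk]
      have h1 : (φ ^ ((k.natAbs : ℤ))) ((φ ^ (-(k.natAbs : ℤ))) r) = r := by
        rw [← hpowadd, show (k.natAbs : ℤ) + -(k.natAbs : ℤ) = 0 from by ring, hpow0]
      have h2 : dist r ((φ ^ (-(k.natAbs : ℤ))) r)
          = dist ((φ ^ ((k.natAbs : ℤ))) r) r := by
        conv_lhs => rw [← (φ ^ ((k.natAbs : ℤ))).dist_eq]
        rw [h1]
      rw [h2, dist_comm, (hdistnat k.natAbs).1]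
      congr 1
      push_cast [Nat.cast_natAbs]
      rw [abs_neg, abs_abs]
  have hdist2 : ∀ a b : ℤ, dist ((φ ^ a) r) ((φ ^ b) r) = |(b : ℝ) - (a : ℝ)| * L := by
    intro a b
    have h1 : (φ ^ a) ((φ ^ (b - a)) r) = (φ ^ b) r := by
      rw [← hpowadd, show a + (b - a) = b from by ring]
    calc dist ((φ ^ a) r) ((φ ^ b) r) = dist ((φ ^ a) r) ((φ ^ a) ((φ ^ (b - a)) r)) := by
          rw [h1]
      _ = dist r ((φ ^ (b - a)) r) := (φ ^ a).dist_eq _ _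
      _ = |((b - a : ℤ) : ℝ)| * L := hdistz _
      _ = |(b : ℝ) - (a : ℝ)| * L := by push_cast; ring_nf
  -- parametrize the fundamental segment
  obtain ⟨σ, hσiso0, hσ0, hσL0, hσimg0⟩ := seg_spec h r (φ r)
  rw [hrL] at hσiso0 hσL0 hσimg0
  have hσr : ∀ u ∈ Icc (0:ℝ) L, dist r (σ u) = u := by
    intro u hu
    rw [← hσ0]; exact dist_param hσiso0 hu
  have hσmem : ∀ u ∈ Icc (0:ℝ) L, σ u ∈ seg h r (φ r) := by
    intro u hu
    rw [← hσimg0]; exact ⟨u, hu, rfl⟩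
  have hσφr : ∀ u ∈ Icc (0:ℝ) L, dist (σ u) (φ r) = L - u := by
    intro u hu
    have := dist_add_of_mem_seg h (hσmem u hu)
    rw [hσr u hu, hrL] at this
    linarith
  -- the axis
  set A : ℝ → T := fun t => (φ ^ (⌊t / L⌋ : ℤ)) (σ (t - ⌊t / L⌋ * L)) with hA
  have hfrac : ∀ t : ℝ, 0 ≤ t - ⌊t / L⌋ * L ∧ t - ⌊t / L⌋ * L < L := by
    intro t
    have h1 : (⌊t/L⌋ : ℝ) ≤ t / L := Int.floor_le (t / L)
    have h2 : t / L < ⌊t/L⌋ + 1 := Int.lt_floor_add_one (t / L)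
    have h3 : (⌊t/L⌋ : ℝ) * L ≤ t := by
      calc (⌊t/L⌋ : ℝ) * L ≤ (t / L) * L := by nlinarith
      _ = t := by field_simp
    have h4 : t < ((⌊t/L⌋ : ℝ) + 1) * L := by
      calc t = (t / L) * L := by field_simp
      _ < ((⌊t/L⌋ : ℝ) + 1) * L := by nlinarith
    constructor <;> nlinarith
  have hfracIcc : ∀ t : ℝ, t - ⌊t / L⌋ * L ∈ Icc (0:ℝ) L :=
    fun t => ⟨(hfrac t).1, le_of_lt (hfrac t).2⟩
  -- A is an isometry
  have hAdist : ∀ s t : ℝ, s ≤ t → dist (A s) (A t) = t - s := by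
    intro s t hst
    set n := ⌊s / L⌋ with hn
    set m := ⌊t / L⌋ with hm
    have hnm : n ≤ m := Int.floor_le_floor (by gcongr)
    set u := s - n * L with hu
    set v := t - m * L with hv
    have huI : u ∈ Icc (0:ℝ) L := hfracIcc s
    have hvI : v ∈ Icc (0:ℝ) L := hfracIcc t
    have hAs : A s = (φ ^ n) (σ u) := rfl
    have hAt : A t = (φ ^ m) (σ v) := rfl
    have hsplit : A t = (φ ^ n) ((φ ^ (m - n)) (σ v)) := by
      rw [hAt, ← hpowadd, show n + (m - n) = m from by ring]
    rw [hAs, hsplit, (φ ^ n).dist_eq]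
    rcases eq_or_lt_of_le hnm with heq | hlt
    · -- same block
      have : m - n = 0 := by rw [heq]; ring
      rw [this, hpow0]
      rw [hσiso0 u huI v hvI]
      have : u - v = s - t := by
        rw [hu, hv, heq]; ring
      rw [this, abs_of_nonpos (by linarith)]
      ring
    · -- different blocks
      set k := m - n with hk
      have hk1 : 1 ≤ k := by omega
      have hts : t - s = (k : ℝ) * L + v - u := by
        rw [hu, hv, hk]; push_cast; ring
      have hub : dist (σ u) ((φ ^ k) (σ v)) ≤ (k : ℝ) * L + v - u := by
        calc dist (σ u) ((φ ^ k) (σ v)) ≤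
            dist (σ u) (φ r) + dist (φ r) ((φ ^ k) r) + dist ((φ ^ k) r) ((φ ^ k) (σ v)) := by
              linarith [dist_triangle4 (σ u) (φ r) ((φ ^ k) r) ((φ ^ k) (σ v))]
          _ = (L - u) + ((k : ℝ) - 1) * L + v := by
              rw [hσφr u huI, (φ ^ k).dist_eq]
              have e1 : φ r = (φ ^ (1:ℤ)) r := (hpow1 r).symm
              rw [e1, hdist2 1 k, hσr v hvI]
              have h' : (1:ℝ) ≤ (k:ℝ) := by exact_mod_cast hk1
              push_cast
              rw [abs_of_nonneg (by linarith : (0:ℝ) ≤ (k:ℝ) - 1)]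
          _ = (k : ℝ) * L + v - u := by ring
      have hlb : (k : ℝ) * L + v - u ≤ dist (σ u) ((φ ^ k) (σ v)) := by
        have htri := dist_triangle4 r (σ u) ((φ ^ k) (σ v)) ((φ ^ (k+1)) r)
        have e1 : dist r ((φ ^ (k+1)) r) = ((k : ℝ) + 1) * L := by
          have h9 := hdist2 0 (k+1)
          rw [hpow0] at h9
          rw [h9]
          have h' : (1:ℝ) ≤ (k:ℝ) := by exact_mod_cast hk1
          push_cast
          rw [abs_of_nonneg (by linarith : (0:ℝ) ≤ (k:ℝ)+1 - 0)]
          ring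
        have e2 : dist ((φ ^ k) (σ v)) ((φ ^ (k+1)) r) = L - v := by
          rw [hpowsucc k r, (φ ^ k).dist_eq]
          exact hσφr v hvI
        rw [e1, e2, hσr u huI] at htri
        linarith
      rw [hts]
      linarith
  have hAiso : Isometry A := by
    apply Isometry.of_dist_eq
    intro s t
    rcases le_total s t with hst | hst
    · rw [hAdist s t hst, Real.dist_eq, abs_of_nonpos (by linarith)]; ring
    · rw [dist_comm, hAdist t s hst, Real.dist_eq, abs_of_nonneg (by linarith)]
  -- equivariance
  have hAequiv : ∀ t : ℝ, φ (A t) = A (t + L) := by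
    intro t
    have hfl : ⌊(t + L) / L⌋ = ⌊t / L⌋ + 1 := by
      rw [show (t + L)/L = t/L + 1 from by field_simp]
      exact Int.floor_add_one (t / L)
    have harg : (t + L) - (⌊(t + L)/L⌋ : ℝ) * L = t - (⌊t/L⌋ : ℝ) * L := by
      rw [hfl]; push_cast; ring
    show φ ((φ ^ (⌊t/L⌋ : ℤ)) (σ (t - ⌊t/L⌋ * L))) = (φ ^ (⌊(t+L)/L⌋ : ℤ)) (σ ((t+L) - ⌊(t+L)/L⌋ * L))
    rw [harg, hfl]
    rw [show (⌊t/L⌋ : ℤ) + 1 = 1 + ⌊t/L⌋ from by ring, hpowadd 1 (⌊t/L⌋) _, hpow1]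
  -- segments along the axis are images of intervals
  have hsegA : ∀ u v : ℝ, u ≤ v → seg h (A u) (A v) = A '' Icc u v := by
    intro u v huv
    exact (image_eq_seg h huv (fun s _ t _ => by rw [hAiso.dist_eq, Real.dist_eq])).symm
  have hsegAsub : ∀ a b u v : ℝ, a ≤ u → u ≤ v → v ≤ b →
      seg h (A u) (A v) ⊆ seg h (A a) (A b) := by
    intro a b u v hau huv hvb
    rw [hsegA u v huv, hsegA a b (by linarith)]
    exact Set.image_mono (Icc_subset_Icc hau hvb)
  have hAdistabs : ∀ u t : ℝ, dist (A u) (A t) = |t - u| := by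
    intro u t
    rw [hAiso.dist_eq, Real.dist_eq, abs_sub_comm]
  -- window projection lemma
  have hwin : ∀ (x : T) (a b : ℝ), a ≤ b → ∃ tw, tw ∈ Icc a b ∧
      (∀ t ∈ Icc a b, dist x (A t) = dist x (A tw) + |t - tw|) ∧
      (∀ t ∈ Icc a b, seg h x (A tw) ∩ seg h (A tw) (A t) = {A tw}) := by
    intro x a b hab
    obtain ⟨w, hw1, hw2, hwd, hwint⟩ := wpoint h x (A a) (A b)
    obtain ⟨u, huI, huw⟩ : ∃ u, u ∈ Icc a b ∧ A u = w := by
      rw [hsegA a b hab] at hw2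
      obtain ⟨u, huI, he⟩ := hw2
      exact ⟨u, huI, he⟩
    subst huw
    have hwa_add : dist (A a) (A u) + dist (A u) x = dist (A a) x := dist_add_of_mem_seg h hw1
    have hbr : ∀ t ∈ Icc a b, seg h x (A u) ∩ seg h (A u) (A t) = {A u} := by
      intro t htI
      apply Set.Subset.antisymm
      · rintro z ⟨hz1, hz2⟩
        have hsub : seg h x (A u) ⊆ seg h x (A a) :=
          seg_sub h (by rw [seg_comm]; exact hw1)
        have hz1' : z ∈ seg h (A a) x := by
          rw [seg_comm h (A a) x]; exact hsub hz1
        have hz2' : z ∈ seg h (A a) (A b) := by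
          rcases le_total u t with hut | htu
          · exact hsegAsub a b u t huI.1 hut htI.2 hz2
          · rw [seg_comm] at hz2
            exact hsegAsub a b t u htI.1 htu huI.2 hz2
        have hzw : z ∈ seg h (A a) (A u) := by rw [← hwint]; exact ⟨hz1', hz2'⟩
        have hd1 : dist (A a) z ≤ dist (A a) (A u) := dist_le_of_mem_seg h hzw
        have hd2 : dist x z + dist z (A u) = dist x (A u) := dist_add_of_mem_seg h hz1
        have htri : dist (A a) x ≤ dist (A a) z + dist z x := dist_triangle _ _ _
        have hcz : dist z x = dist x z := dist_comm _ _
        have hcu : dist (A u) x = dist x (A u) := dist_comm _ _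
        have hdz : dist z (A u) ≥ 0 := dist_nonneg
        have hzeq : dist (A a) z = dist (A a) (A u) := by linarith
        have := eq_of_dist_eq_seg h hzw (right_mem_seg h (A a) (A u)) hzeq
        rw [mem_singleton_iff]
        exact this
      · intro z hz
        rw [mem_singleton_iff] at hz
        rw [hz]
        exact ⟨right_mem_seg h _ _, left_mem_seg h _ _⟩
    refine ⟨u, huI, ?_, hbr⟩
    intro t htI
    have hgl := glue h (hbr t htI)
    rw [hgl.1, hAdistabs u t]
  -- global projection lemma
  have hproj : ∀ x : T, ∃ tw : ℝ,
      (∀ t : ℝ, dist x (A t) = dist x (A tw) + |t - tw|) ∧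
      (∀ t : ℝ, seg h x (A tw) ∩ seg h (A tw) (A t) = {A tw}) := by
    intro x
    set K := dist x (A 0) with hK
    have hK0 : 0 ≤ K := dist_nonneg
    obtain ⟨tw, htwI, hform, hglue⟩ := hwin x (-K - 1) (K + 1) (by linarith)
    set c := dist x (A tw) with hc
    have hc0 : 0 ≤ c := dist_nonneg
    have htwK : -K ≤ tw ∧ tw ≤ K := by
      have h0I : (0:ℝ) ∈ Icc (-K-1) (K+1) := ⟨by linarith, by linarith⟩
      have he := hform 0 h0I
      rw [zero_sub, abs_neg] at he
      constructor
      · rcases abs_cases tw with ⟨h1, h2⟩ | ⟨h1, h2⟩ <;> linarith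
      · rcases abs_cases tw with ⟨h1, h2⟩ | ⟨h1, h2⟩ <;> linarith
    obtain ⟨htwl, htwr⟩ := htwK
    have hmain : ∀ t : ℝ, dist x (A t) = c + |t - tw| ∧
        seg h x (A tw) ∩ seg h (A tw) (A t) = {A tw} := by
      intro t
      set a' := min (-K-1) (t - 1) with ha'
      set b' := max (K+1) (t + 1) with hb'
      have hab' : a' ≤ b' :=
        le_trans (min_le_left _ _) (le_trans (by linarith) (le_max_left _ _))
      obtain ⟨tw', htwI', hform', hglue'⟩ := hwin x a' b' hab'
      set c' := dist x (A tw') with hc'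
      have hc'0 : 0 ≤ c' := dist_nonneg
      have hsub : Icc (-K-1) (K+1) ⊆ Icc a' b' :=
        Icc_subset_Icc (min_le_left _ _) (le_max_left _ _)
      have he1l : (-K-1 : ℝ) ∈ Icc (-K-1) (K+1) := ⟨le_refl _, by linarith⟩
      have he3l : (K+1 : ℝ) ∈ Icc (-K-1) (K+1) := ⟨by linarith, le_refl _⟩
      have e1 := (hform _ he1l).symm.trans (hform' _ (hsub he1l))
      have e2 := (hform _ htwI).symm.trans (hform' _ (hsub htwI))
      have e3 := (hform _ he3l).symm.trans (hform' _ (hsub he3l))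
      rw [show (-K-1) - tw = -(tw + K + 1) from by ring, abs_neg,
        abs_of_nonneg (by linarith : (0:ℝ) ≤ tw + K + 1)] at e1
      rw [sub_self, abs_zero] at e2
      rw [abs_of_nonneg (by linarith : (0:ℝ) ≤ (K+1) - tw)] at e3
      have hkey : tw' = tw ∧ c' = c := by
        rcases abs_cases ((-K-1) - tw') with ⟨u1, s1⟩ | ⟨u1, s1⟩ <;>
        rcases abs_cases (tw - tw') with ⟨u2, s2⟩ | ⟨u2, s2⟩ <;>
        rcases abs_cases ((K+1) - tw') with ⟨u3, s3⟩ | ⟨u3, s3⟩ <;>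
        rw [u1] at e1 <;> rw [u2] at e2 <;> rw [u3] at e3 <;>
        exact ⟨by linarith, by linarith⟩
      have htI' : t ∈ Icc a' b' :=
        ⟨le_trans (min_le_right _ _) (by linarith), le_trans (by linarith) (le_max_right _ _)⟩
      constructor
      · rw [hform' t htI', hkey.1, hkey.2]
      · have := hglue' t htI'
        rw [hkey.1] at this
        exact this
    exact ⟨tw, fun t => (hmain t).1, fun t => (hmain t).2⟩
  -- the distance formula for points on a hanging segment
  have hzform : ∀ (x : T) (tw : ℝ),
      (∀ t, dist x (A t) = dist x (A tw) + |t - tw|) →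
      (∀ t, seg h x (A tw) ∩ seg h (A tw) (A t) = {A tw}) →
      ∀ z ∈ seg h x (A tw), ∀ t, dist z (A t) = dist z (A tw) + |t - tw| := by
    intro x tw hform hglue z hz t
    have hgl := glue h (hglue t)
    have hzmem : z ∈ seg h x (A t) := by rw [hgl.2]; exact Or.inl hz
    have h1 := dist_add_of_mem_seg h hzmem
    have h2 := dist_add_of_mem_seg h hz
    have h3 := hform t
    have h4 : dist z (A t) = dist x (A t) - dist x z := by linarith
    have h5 : dist z (A tw) = dist x (A tw) - dist x z := by linarith
    rw [h4, h5, h3]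
    ring
  -- displacement formula
  have hdisp : ∀ (x : T) (tw : ℝ),
      (∀ t, dist x (A t) = dist x (A tw) + |t - tw|) →
      (∀ t, seg h x (A tw) ∩ seg h (A tw) (A t) = {A tw}) →
      dist x (φ x) = 2 * dist x (A tw) + L := by
    intro x tw hform hglue
    set c := dist x (A tw) with hc
    have habsL : |tw + L - tw| = L := by
      rw [show tw + L - tw = L from by ring, abs_of_nonneg hL.le]
    have habsL' : |tw - (tw + L)| = L := by
      rw [show tw - (tw + L) = -L from by ring, abs_neg, abs_of_nonneg hL.le]
    have hφform : ∀ t, dist (φ x) (A t) = c + |t - (tw + L)| := by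
      intro t
      have h1 : φ (A (t - L)) = A t := by
        rw [hAequiv (t - L)]
        congr 1
        ring
      rw [← h1, φ.dist_eq, hform (t - L)]
      congr 1
      rw [show t - L - tw = t - (tw + L) from by ring]
    have hφc : dist (φ x) (A (tw + L)) = c := by
      rw [hφform (tw + L), sub_self, abs_zero, add_zero]
    have hφform' : ∀ t, dist (φ x) (A t) = dist (φ x) (A (tw + L)) + |t - (tw + L)| := by
      intro t
      rw [hφform t, hφc]
    have hφglue : ∀ t, seg h (φ x) (A (tw + L)) ∩ seg h (A (tw + L)) (A t) = {A (tw + L)} := by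
      intro t
      have h1 := hglue (t - L)
      have h2 : (⇑φ) '' (seg h x (A tw) ∩ seg h (A tw) (A (t - L))) = {φ (A tw)} := by
        rw [h1, Set.image_singleton]
      rw [Set.image_inter φ.injective, image_seg, image_seg] at h2
      have h3 : φ (A (t - L)) = A t := by
        rw [hAequiv (t - L)]
        congr 1
        ring
      rw [h3, hAequiv tw] at h2
      exact h2
    have hxw' : dist x (A (tw + L)) = c + L := by
      rw [hform (tw + L), habsL]
    have hkey : seg h x (A (tw + L)) ∩ seg h (A (tw + L)) (φ x) = {A (tw + L)} := by
      apply Set.Subset.antisymm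
      · rintro z ⟨hz1, hz2⟩
        have hz2' : z ∈ seg h (φ x) (A (tw + L)) := by rw [seg_comm]; exact hz2
        rw [(glue h (hglue (tw + L))).2] at hz1
        rcases hz1 with hz1 | hz1
        · exfalso
          have hf1 := hzform x tw hform hglue z hz1
          have hf2 := hzform (φ x) (tw + L) hφform' hφglue z hz2'
          have g1 := hf1 (tw + L)
          have g2 := hf2 tw
          rw [habsL] at g1
          rw [habsL'] at g2
          linarith
        · have hz1'' : z ∈ seg h (A (tw + L)) (A tw) := by
            rw [← seg_comm]; exact hz1
          have h9 := hφglue tw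
          have : z ∈ ({A (tw + L)} : Set T) := by rw [← h9]; exact ⟨hz2', hz1''⟩
          exact this
      · intro z hz
        rw [mem_singleton_iff] at hz
        rw [hz]
        exact ⟨right_mem_seg h _ _, left_mem_seg h _ _⟩
    have hg2 := glue h hkey
    have hlast : dist (A (tw + L)) (φ x) = c := by
      rw [← hAequiv tw, φ.dist_eq, dist_comm]
    rw [hg2.1, hxw', hlast]
    ring
  -- translation length equals L
  haveI hneT : Nonempty T := ⟨p⟩
  have hlen : translationLength (⇑φ) = L := by
    apply le_antisymm
    · have h1 := hlle (A 0)
      have h2 : dist (A 0) (φ (A 0)) = L := by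
        rw [hAequiv 0, hAiso.dist_eq, Real.dist_eq,
          show (0:ℝ) - (0 + L) = -L from by ring, abs_neg, abs_of_nonneg hL.le]
      rw [h2] at h1
      exact h1
    · show L ≤ ⨅ x : T, dist x (φ x)
      apply le_ciInf
      intro x
      obtain ⟨tw, hform, hglue⟩ := hproj x
      rw [hdisp x tw hform hglue]
      linarith [dist_nonneg (x := x) (y := A tw)]
  have hrange : Set.range A = {x : T | dist x (φ x) = L} := by
    ext x
    constructor
    · rintro ⟨t, rfl⟩
      show dist (A t) (φ (A t)) = L
      rw [hAequiv t, hAiso.dist_eq, Real.dist_eq,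
        show t - (t + L) = -L from by ring, abs_neg, abs_of_nonneg hL.le]
    · intro hx
      obtain ⟨tw, hform, hglue⟩ := hproj x
      have hd := hdisp x tw hform hglue
      rw [Set.mem_setOf_eq] at hx
      rw [hx] at hd
      have hc0 : dist x (A tw) = 0 := by linarith
      exact ⟨tw, (dist_eq_zero.mp hc0).symm⟩
  -- distance between two points via their projections
  have hQ : ∀ (x y : T) (tx ty : ℝ),
      (∀ t, dist x (A t) = dist x (A tx) + |t - tx|) →
      (∀ t, seg h x (A tx) ∩ seg h (A tx) (A t) = {A tx}) →
      (∀ t, dist y (A t) = dist y (A ty) + |t - ty|) →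
      (∀ t, seg h y (A ty) ∩ seg h (A ty) (A t) = {A ty}) →
      tx ≠ ty →
      dist x y = dist x (A tx) + |tx - ty| + dist y (A ty) := by
    intro x y tx ty hfx hgx hfy hgy hnexy
    have hkey : seg h x (A ty) ∩ seg h (A ty) y = {A ty} := by
      apply Set.Subset.antisymm
      · rintro z ⟨hz1, hz2⟩
        rw [(glue h (hgx ty)).2] at hz1
        have hz2' : z ∈ seg h y (A ty) := by rw [seg_comm]; exact hz2
        rcases hz1 with hz1 | hz1
        · exfalso
          have hf1 := hzform x tx hfx hgx z hz1
          have hf2 := hzform y ty hfy hgy z hz2'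
          have g1 := hf1 ty
          have g2 := hf2 tx
          have habs : |ty - tx| = |tx - ty| := abs_sub_comm _ _
          rw [habs] at g1
          have h0 : |tx - ty| = 0 := by linarith
          exact hnexy (by have := abs_eq_zero.mp h0; linarith)
        · obtain ⟨u, rfl⟩ : ∃ u, A u = z := by
            rcases le_total tx ty with hle | hle
            · rw [hsegA tx ty hle] at hz1
              obtain ⟨u, _, he⟩ := hz1
              exact ⟨u, he⟩
            · rw [seg_comm h (A tx) (A ty), hsegA ty tx hle] at hz1
              obtain ⟨u, _, he⟩ := hz1
              exact ⟨u, he⟩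
          have hf2 := hzform y ty hfy hgy _ hz2'
          have g := hf2 u
          rw [dist_self] at g
          have h1 : u = ty := by
            have h2 : |u - ty| = 0 := by
              have := dist_nonneg (x := A u) (y := A ty)
              have := abs_nonneg (u - ty)
              linarith
            have := abs_eq_zero.mp h2
            linarith
          rw [mem_singleton_iff, h1]
      · intro z hz
        rw [mem_singleton_iff] at hz
        rw [hz]
        exact ⟨right_mem_seg h _ _, left_mem_seg h _ _⟩
    have hgl := glue h hkey
    rw [hgl.1, hfx ty, dist_comm (A ty) y, abs_sub_comm ty tx]
  -- assemble the answer
  refine ⟨A, hAiso, ?_, ?_, ?_⟩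
  · intro t
    rw [hlen]
    exact hAequiv t
  · rw [hlen]
    exact hrange
  · intro B hB hBinv
    have hψex : ∀ t : ℝ, ∃ s, B s = φ (B t) := by
      intro t
      have hmem : φ (B t) ∈ ⇑φ '' Set.range B := ⟨B t, ⟨t, rfl⟩, rfl⟩
      rw [hBinv] at hmem
      exact hmem
    choose ψ hψ using hψex
    have hψiso : ∀ s t, |ψ s - ψ t| = |s - t| := by
      intro s t
      have h1 : dist (B (ψ s)) (B (ψ t)) = |ψ s - ψ t| := by
        rw [hB.dist_eq, Real.dist_eq]
      rw [hψ s, hψ t, φ.dist_eq, hB.dist_eq, Real.dist_eq] at h1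
      exact h1.symm
    rcases real_iso_dichotomy ψ hψiso with hcase | hcase
    · -- translation case
      set c₀ := ψ 0 with hc₀
      have hφB : ∀ t, φ (B t) = B (t + c₀) := by
        intro t
        rw [← hψ t, hcase t]
        congr 1
        ring
      have hdispB : ∀ t : ℝ, dist (B t) (φ (B t)) = |c₀| := by
        intro t
        rw [hφB t, hB.dist_eq, Real.dist_eq,
          show t - (t + c₀) = -c₀ from by ring, abs_neg]
      set e := (|c₀| - L) / 2 with he
      have hBdata : ∀ t : ℝ, ∃ tw, dist (B t) (A tw) = e ∧
          (∀ u, dist (B t) (A u) = dist (B t) (A tw) + |u - tw|) ∧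
          (∀ u, seg h (B t) (A tw) ∩ seg h (A tw) (A u) = {A tw}) := by
        intro t
        obtain ⟨tw, hform, hglue⟩ := hproj (B t)
        have hd := hdisp (B t) tw hform hglue
        rw [hdispB t] at hd
        exact ⟨tw, by rw [he]; linarith, hform, hglue⟩
      have he0 : 0 ≤ e := by
        obtain ⟨tw, hce, _, _⟩ := hBdata 0
        rw [← hce]
        exact dist_nonneg
      rcases eq_or_lt_of_le he0 with heq | hlt
      · -- e = 0: the line B lies on the axis
        have hBsub : Set.range B ⊆ Set.range A := by
          rintro _ ⟨t, rfl⟩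
          obtain ⟨tw, hce, _, _⟩ := hBdata t
          rw [← heq] at hce
          exact ⟨tw, (dist_eq_zero.mp hce).symm⟩
        have hFex : ∀ t : ℝ, ∃ s, A s = B t := fun t => hBsub ⟨t, rfl⟩
        choose F hF using hFex
        have hFiso : ∀ s t, |F s - F t| = |s - t| := by
          intro s t
          have h1 : dist (A (F s)) (A (F t)) = |F s - F t| := by
            rw [hAiso.dist_eq, Real.dist_eq]
          rw [hF s, hF t, hB.dist_eq, Real.dist_eq] at h1
          exact h1.symm
        apply Set.Subset.antisymm hBsub
        rintro _ ⟨s, rfl⟩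
        rcases real_iso_dichotomy F hFiso with hc | hc
        · refine ⟨s - F 0, ?_⟩
          rw [← hF (s - F 0), hc (s - F 0)]
          congr 1
          ring
        · refine ⟨F 0 - s, ?_⟩
          rw [← hF (F 0 - s), hc (F 0 - s)]
          congr 1
          ring
      · -- e > 0: impossible
        exfalso
        obtain ⟨p0, hp0e, hp0f, hp0g⟩ := hBdata 0
        obtain ⟨p1, hp1e, hp1f, hp1g⟩ := hBdata (4*e+1)
        obtain ⟨p2, hp2e, hp2f, hp2g⟩ := hBdata (8*e+2)
        have hd01 : dist (B 0) (B (4*e+1)) = 4*e+1 := by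
          rw [hB.dist_eq, Real.dist_eq,
            show (0:ℝ) - (4*e+1) = -(4*e+1) from by ring, abs_neg,
            abs_of_nonneg (by linarith)]
        have hd12 : dist (B (4*e+1)) (B (8*e+2)) = 4*e+1 := by
          rw [hB.dist_eq, Real.dist_eq,
            show (4*e+1:ℝ) - (8*e+2) = -(4*e+1) from by ring, abs_neg,
            abs_of_nonneg (by linarith)]
        have hd02 : dist (B 0) (B (8*e+2)) = 8*e+2 := by
          rw [hB.dist_eq, Real.dist_eq,
            show (0:ℝ) - (8*e+2) = -(8*e+2) from by ring, abs_neg,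
            abs_of_nonneg (by linarith)]
        have hne01 : p0 ≠ p1 := by
          intro hpe
          have htri := dist_triangle (B 0) (A p0) (B (4*e+1))
          have h1 : dist (A p0) (B (4*e+1)) = e := by
            rw [hpe, dist_comm]
            exact hp1e
          rw [hd01, hp0e, h1] at htri
          linarith
        have hne12 : p1 ≠ p2 := by
          intro hpe
          have htri := dist_triangle (B (4*e+1)) (A p1) (B (8*e+2))
          have h1 : dist (A p1) (B (8*e+2)) = e := by
            rw [hpe, dist_comm]
            exact hp2e
          rw [hd12, hp1e, h1] at htri
          linarith
        have hne02 : p0 ≠ p2 := by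
          intro hpe
          have htri := dist_triangle (B 0) (A p0) (B (8*e+2))
          have h1 : dist (A p0) (B (8*e+2)) = e := by
            rw [hpe, dist_comm]
            exact hp2e
          rw [hd02, hp0e, h1] at htri
          linarith
        have q01 := hQ (B 0) (B (4*e+1)) p0 p1 hp0f hp0g hp1f hp1g hne01
        have q12 := hQ (B (4*e+1)) (B (8*e+2)) p1 p2 hp1f hp1g hp2f hp2g hne12
        have q02 := hQ (B 0) (B (8*e+2)) p0 p2 hp0f hp0g hp2f hp2g hne02
        rw [hd01, hp0e, hp1e] at q01
        rw [hd12, hp1e, hp2e] at q12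
        rw [hd02, hp0e, hp2e] at q02
        have htri2 : |p0 - p2| ≤ |p0 - p1| + |p1 - p2| := abs_sub_le p0 p1 p2
        linarith
    · -- reflection case: φ has a fixed point, contradiction
      exfalso
      set t₀ := ψ 0 / 2 with ht₀f
      have hft : ψ t₀ = t₀ := by
        rw [hcase t₀, ht₀f]
        ring
      have hfix : φ (B t₀) = B t₀ := by rw [← hψ t₀, hft]
      have hcontra := hlle (B t₀)
      rw [hfix, dist_self] at hcontra
      linarith
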